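/- (Theorem 4 structure) Let q1, q2 ≥ 1, M = q1+q2 with gcd(M, q1) = 1. Performing the lifting update step with composite update filter U(z) = R_u(z)S(z) on a 2-channel rational filterbank is equivalent to replacing the analysis lowpass filter G_l by G_l^{new}(z) = G_l(z) + (1/q2) Σ_{r=0}^{q2−1} G_h(z^{q1/q2} W_{q2}^{q1 r}) U(z^{M/q2} W_{q2}^{M r}), where W_{q2} = exp(−2πi/q2); both systems produce identical upper-branch outputs for every input. -/

import Mathlib

/-- `M`-fold upsampler: `(↑M x)[M n] = x[n]`, zero at indices not divisible by `M`. -/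
noncomputable def upSample (M : ℕ) (x : ℤ → ℝ) : ℤ → ℝ :=
  fun n => if (M : ℤ) ∣ n then x (n / M) else 0

/-- `M`-fold downsampler: `(↓M x)[n] = x[M n]`. -/
def downSample (M : ℕ) (x : ℤ → ℝ) : ℤ → ℝ := fun n => x ((M : ℤ) * n)

/-- Filtering: discrete convolution with impulse response `h`. -/
noncomputable def conv (h x : ℤ → ℝ) : ℤ → ℝ := fun n => ∑ᶠ k : ℤ, h k * x (n - k)

/-- Evaluation of the FIR (Laurent polynomial) transfer function
`H(z) = Σ_k h[k] z^{-k}` at a nonzero complex `z`. -/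
noncomputable def lev (h : ℤ → ℝ) (z : ℂ) : ℂ := ∑ᶠ k : ℤ, (h k : ℂ) * z ^ (-k)

lemma finsum_reindex {M : Type*} [AddCommMonoid M] (f : ℤ → M) (g : ℤ → ℤ)
    (hg : Function.Injective g)
    (h0 : ∀ k, k ∉ Set.range g → f k = 0) : ∑ᶠ k, f k = ∑ᶠ j, f (g j) := by
  rw [← finsum_mem_range hg, finsum_mem_def,
    Set.indicator_eq_self.2 (fun k hk => by by_contra h; exact hk (h0 k h))]

lemma upSample_mul (q : ℕ) (hq : 1 ≤ q) (x : ℤ → ℝ) (m : ℤ) :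
    upSample q x ((q : ℤ) * m) = x m := by
  have hq0 : (q : ℤ) ≠ 0 := by exact_mod_cast Nat.one_le_iff_ne_zero.1 hq
  simp [upSample, Dvd.intro m rfl, Int.mul_ediv_cancel_left _ hq0]

/-- Reindexed convolution-with-upsampler formula. -/
lemma conv_up (h x : ℤ → ℝ) (q : ℕ) (hq : 1 ≤ q) (t : ℤ) :
    conv h (upSample q x) t = ∑ᶠ m : ℤ, h (t - q * m) * x m := by
  have hq0 : (q : ℤ) ≠ 0 := by exact_mod_cast Nat.one_le_iff_ne_zero.1 hq
  have hginj : Function.Injective (fun m : ℤ => t - q * m) := by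
    intro a b hab
    simp only at hab
    have : (q:ℤ) * a = q * b := by omega
    exact mul_left_cancel₀ hq0 this
  rw [show conv h (upSample q x) t = ∑ᶠ k : ℤ, h k * upSample q x (t - k) from rfl,
    finsum_reindex _ _ hginj]
  · apply finsum_congr; intro m
    simp only [sub_sub_cancel]
    rw [upSample_mul q hq]
  · intro k hk
    have : ¬ ((q:ℤ) ∣ t - k) := by
      rintro ⟨c, hc⟩
      exact hk ⟨c, show t - (q:ℤ) * c = k by omega⟩
    simp [this, upSample]

open Function Polynomial in
/-- A finitely supported Laurent series vanishing at all nonzero points is zero. -/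
lemma laurent_ext (f : ℤ → ℂ) (hf : (Function.support f).Finite)
    (h0 : ∀ w : ℂ, w ≠ 0 → ∑ᶠ k : ℤ, f k * w ^ k = 0) : ∀ k, f k = 0 := by
  classical
  set s := hf.toFinset with hs
  set N : ℕ := s.sup (fun k => k.natAbs) with hN
  have hkN : ∀ k ∈ s, 0 ≤ k + N := by
    intro k hk
    have : k.natAbs ≤ N := Finset.le_sup (f := fun k : ℤ => k.natAbs) hk
    omega
  set p : ℂ[X] := ∑ k ∈ s, Polynomial.C (f k) * Polynomial.X ^ (k + N).toNat with hp
  have hpeval : ∀ w : ℂ, w ≠ 0 → p.eval w = 0 := by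
    intro w hw
    have hsum : ∑ᶠ k : ℤ, f k * w ^ k = ∑ k ∈ s, f k * w ^ k := by
      apply finsum_eq_finset_sum_of_support_subset
      intro k hk
      have : f k ≠ 0 := by intro h; simp [h] at hk
      simpa [hs] using this
    have : p.eval w = ∑ k ∈ s, f k * w ^ ((k + N).toNat) := by
      simp [hp, eval_finset_sum]
    rw [this]
    have : ∀ k ∈ s, f k * w ^ ((k + N).toNat) = (f k * w ^ k) * w ^ (N:ℕ) := by
      intro k hk
      have h1 : ((k + N).toNat : ℤ) = k + N := Int.toNat_of_nonneg (hkN k hk)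
      have : (w : ℂ) ^ ((k + N).toNat : ℤ) = w ^ (k + (N:ℤ)) := by rw [h1]
      rw [zpow_natCast] at this
      rw [this, zpow_add₀ hw, zpow_natCast]
      ring
    rw [Finset.sum_congr rfl this, ← Finset.sum_mul, ← hsum, h0 w hw, zero_mul]
  have hp0 : p = 0 := by
    apply p.eq_zero_of_infinite_isRoot
    apply Set.Infinite.mono (s := {x : ℂ | x ≠ 0})
    · intro w hw; exact hpeval w hw
    · have : ({x : ℂ | x ≠ 0}) = {(0:ℂ)}ᶜ := rfl
      rw [this]
      exact Set.Finite.infinite_compl (Set.finite_singleton 0)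
  intro k
  by_cases hk : k ∈ s
  · have hco : p.coeff ((k + N).toNat) = f k := by
      rw [hp, Polynomial.finset_sum_coeff]
      rw [Finset.sum_eq_single k]
      · simp
      · intro b hb hbk
        have hne : (b + N).toNat ≠ (k + N).toNat := by
          have h1 := Int.toNat_of_nonneg (hkN b hb)
          have h2 := Int.toNat_of_nonneg (hkN k hk)
          intro h; apply hbk; omega
        simp only [Polynomial.coeff_C_mul, Polynomial.coeff_X_pow]
        rw [if_neg (fun heq => hne heq.symm), mul_zero]
      · intro h; exact absurd hk h
    rw [← hco, hp0]; simp
  · by_contra h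
    exact hk (hf.mem_toFinset.2 h)

/-- geometric sum of a root of unity power -/
lemma root_sum (q : ℕ) (hq : 1 ≤ q) (c : ℤ) :
    ∑ r ∈ Finset.range q, (Complex.exp (-(2 * Real.pi * Complex.I) / q)) ^ (c * r) =
      if (q : ℤ) ∣ c then (q : ℂ) else 0 := by
  have hq0 : (q : ℂ) ≠ 0 := by exact_mod_cast Nat.one_le_iff_ne_zero.1 hq
  set ω : ℂ := Complex.exp (-(2 * Real.pi * Complex.I) / q) with hω
  have hprim : IsPrimitiveRoot ω⁻¹ q := by
    have := Complex.isPrimitiveRoot_exp q (Nat.one_le_iff_ne_zero.1 hq)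
    convert this using 1
    rw [hω, ← Complex.exp_neg]
    ring_nf
  have hprim' : IsPrimitiveRoot ω q := by
    simpa using hprim.inv
  have hstep : ∀ r : ℕ, ω ^ (c * r) = (ω ^ c) ^ r := by
    intro r
    rw [zpow_mul, zpow_natCast]
  rw [Finset.sum_congr rfl fun r _ => hstep r]
  by_cases hdvd : (q : ℤ) ∣ c
  · have h1 : ω ^ c = 1 := (hprim'.zpow_eq_one_iff_dvd c).2 hdvd
    simp [h1, hdvd]
  · have h1 : ω ^ c ≠ 1 := fun h => hdvd ((hprim'.zpow_eq_one_iff_dvd c).1 h)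
    rw [geom_sum_eq h1, if_neg hdvd]
    have hq1 : (ω ^ c) ^ q = 1 := by
      rw [← zpow_natCast, ← zpow_mul, mul_comm, zpow_mul, zpow_natCast,
        hprim'.pow_eq_one, one_zpow]
    rw [hq1, sub_self, zero_div]

lemma lev_eq_sum (h : ℤ → ℝ) (hh : (Function.support h).Finite) (z : ℂ) :
    lev h z = ∑ k ∈ hh.toFinset, (h k : ℂ) * z ^ (-k) := by
  apply finsum_eq_finset_sum_of_support_subset
  intro k hk
  have : h k ≠ 0 := by
    intro h0
    simp [lev, h0] at hk
  simpa using this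

/-- `lev h (w ^ q)` as a Laurent series in `w`. -/
lemma lev_pow (h : ℤ → ℝ) (q : ℕ) (hq : 1 ≤ q) (w : ℂ) :
    lev h (w ^ q) =
      ∑ᶠ k : ℤ, (if (q : ℤ) ∣ k then ((h (k / q) : ℝ) : ℂ) else 0) * w ^ (-k) := by
  have hq0 : (q : ℤ) ≠ 0 := by exact_mod_cast Nat.one_le_iff_ne_zero.1 hq
  have hg : Function.Injective (fun t : ℤ => (q : ℤ) * t) :=
    fun a b hab => mul_left_cancel₀ hq0 hab
  rw [show (∑ᶠ k : ℤ, (if (q : ℤ) ∣ k then ((h (k / q) : ℝ) : ℂ) else 0) * w ^ (-k))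
      = ∑ᶠ t : ℤ, (if (q : ℤ) ∣ ((q:ℤ) * t) then ((h (((q:ℤ)*t) / q) : ℝ) : ℂ) else 0)
          * w ^ (-((q:ℤ)*t)) from
    finsum_reindex _ _ hg (by
      intro k hk
      have : ¬ ((q:ℤ) ∣ k) := by
        rintro ⟨c, hc⟩
        exact hk ⟨c, hc.symm⟩
      simp [this])]
  apply finsum_congr
  intro t
  rw [if_pos ⟨t, rfl⟩, Int.mul_ediv_cancel_left _ hq0]
  congr 1
  rw [← zpow_natCast w q, ← zpow_mul]
  congr 1
  ring

lemma supp_dvd_finite (g : ℤ → ℝ) (hg : (Function.support g).Finite) (q : ℕ)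
    (v : ℤ → ℂ) :
    (Function.support (fun k => (if (q:ℤ) ∣ k then ((g (k / q) : ℝ) : ℂ) else 0) * v k)).Finite := by
  apply Set.Finite.subset (hg.image (fun t => (q:ℤ) * t))
  intro k hk
  simp only [Function.mem_support] at hk
  by_cases hdvd : (q:ℤ) ∣ k
  · have hgk : g (k / q) ≠ 0 := by
      intro h0
      simp [hdvd, h0] at hk
    exact ⟨k / q, hgk, Int.mul_ediv_cancel' hdvd⟩
  · simp [hdvd] at hk

lemma coeff_identity (q1 q2 M : ℕ) (h1 : 1 ≤ q1) (h2 : 1 ≤ q2)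
    (hM : M = q1 + q2)
    (gl gh u glnew : ℤ → ℝ)
    (hgl : (Function.support gl).Finite) (hgh : (Function.support gh).Finite)
    (hu : (Function.support u).Finite) (hglnew : (Function.support glnew).Finite)
    (hformula : ∀ w : ℂ, w ≠ 0 →
      lev glnew (w ^ q2) = lev gl (w ^ q2) +
        (1 / (q2 : ℂ)) * ∑ r ∈ Finset.range q2,
          lev gh (w ^ q1 * Complex.exp (-(2 * Real.pi * Complex.I) / q2) ^ (q1 * r)) *
            lev u (w ^ M * Complex.exp (-(2 * Real.pi * Complex.I) / q2) ^ (M * r))) :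
    ∀ t : ℤ, glnew t = gl t + ∑ a ∈ hgh.toFinset, ∑ b ∈ hu.toFinset,
      (if (q1:ℤ) * a + (M:ℤ) * b = (q2:ℤ) * t then gh a * u b else 0) := by
  classical
  have hq2C : ((q2:ℂ)) ≠ 0 := by exact_mod_cast Nat.one_le_iff_ne_zero.1 h2
  set ω : ℂ := Complex.exp (-(2 * Real.pi * Complex.I) / q2) with hω
  have hωne : ω ≠ 0 := Complex.exp_ne_zero _
  set Sg := hgh.toFinset with hSg
  set Su := hu.toFinset with hSu
  set P : ℤ → ℂ := fun k =>
      (if (q2:ℤ) ∣ k then ((glnew (k / q2) : ℝ) : ℂ) else 0)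
      - (if (q2:ℤ) ∣ k then ((gl (k / q2) : ℝ) : ℂ) else 0) with hP
  set Q : ℤ → ℂ := fun k => ∑ a ∈ Sg, ∑ b ∈ Su,
      (if ((q1:ℤ) * a + (M:ℤ) * b = k ∧ (q2:ℤ) ∣ k)
        then ((gh a : ℝ) : ℂ) * ((u b : ℝ) : ℂ) else 0) with hQ
  set E : Finset ℤ := Finset.image (fun p : ℤ × ℤ => (q1:ℤ) * p.1 + (M:ℤ) * p.2) (Sg ×ˢ Su)
    with hE
  -- support of Q · w-power inside E
  have hQsupp : ∀ v : ℤ → ℂ, (Function.support (fun k => Q k * v k)) ⊆ (E : Set ℤ) := by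
    intro v k hk
    simp only [Function.mem_support] at hk
    have hQk : Q k ≠ 0 := fun h0 => hk (by rw [h0, zero_mul])
    obtain ⟨a, ha, hane⟩ := Finset.exists_ne_zero_of_sum_ne_zero hQk
    obtain ⟨b, hb, hbne⟩ := Finset.exists_ne_zero_of_sum_ne_zero hane
    by_cases hcond : ((q1:ℤ) * a + (M:ℤ) * b = k ∧ (q2:ℤ) ∣ k)
    · simp only [hE, Finset.coe_image, Set.mem_image]
      exact ⟨(a, b), by simp [Finset.mem_coe, Finset.mem_product, ha, hb], hcond.1⟩
    · simp [hcond] at hbne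
  -- the Q-sum evaluates to the averaged product term
  have hQsum : ∀ w : ℂ, w ≠ 0 →
      ∑ᶠ k : ℤ, Q k * w ^ (-k) =
        (1 / (q2 : ℂ)) * ∑ r ∈ Finset.range q2,
          lev gh (w ^ q1 * ω ^ (q1 * r)) * lev u (w ^ M * ω ^ (M * r)) := by
    intro w hw
    -- RHS rewriting
    have hzp : ∀ (r : ℕ) (a b : ℤ),
        (w ^ q1 * ω ^ (q1 * r)) ^ (-a) * (w ^ M * ω ^ (M * r)) ^ (-b)
          = w ^ (-((q1:ℤ) * a + (M:ℤ) * b)) *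
            ω ^ ((-((q1:ℤ) * a + (M:ℤ) * b)) * (r:ℤ)) := by
      intro r a b
      rw [mul_zpow, mul_zpow, mul_mul_mul_comm,
        ← zpow_natCast w q1, ← zpow_mul, ← zpow_natCast w M, ← zpow_mul, ← zpow_add₀ hw,
        ← zpow_natCast ω (q1 * r), ← zpow_mul, ← zpow_natCast ω (M * r), ← zpow_mul,
        ← zpow_add₀ hωne]
      congr 1
      · congr 1; push_cast; ring
      · congr 1; push_cast; ring
    have hrhs : (1 / (q2 : ℂ)) * ∑ r ∈ Finset.range q2,
          lev gh (w ^ q1 * ω ^ (q1 * r)) * lev u (w ^ M * ω ^ (M * r))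
        = ∑ a ∈ Sg, ∑ b ∈ Su,
            (if (q2:ℤ) ∣ ((q1:ℤ) * a + (M:ℤ) * b)
              then ((gh a : ℝ) : ℂ) * ((u b : ℝ) : ℂ) * w ^ (-((q1:ℤ) * a + (M:ℤ) * b))
              else 0) := by
      have hterm : ∀ r ∈ Finset.range q2,
          lev gh (w ^ q1 * ω ^ (q1 * r)) * lev u (w ^ M * ω ^ (M * r))
          = ∑ a ∈ Sg, ∑ b ∈ Su,
              ((gh a : ℂ) * (u b : ℂ) * w ^ (-((q1:ℤ) * a + (M:ℤ) * b)) *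
                ω ^ ((-((q1:ℤ) * a + (M:ℤ) * b)) * (r:ℤ))) := by
        intro r _
        rw [lev_eq_sum gh hgh, lev_eq_sum u hu, Finset.sum_mul_sum]
        apply Finset.sum_congr rfl; intro a _
        apply Finset.sum_congr rfl; intro b _
        rw [show ((gh a : ℂ) * (w ^ q1 * ω ^ (q1 * r)) ^ (-a)) *
              ((u b : ℂ) * (w ^ M * ω ^ (M * r)) ^ (-b))
            = (gh a : ℂ) * (u b : ℂ) *
              ((w ^ q1 * ω ^ (q1 * r)) ^ (-a) * (w ^ M * ω ^ (M * r)) ^ (-b)) by ring,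
          hzp r a b]
        ring
      rw [Finset.sum_congr rfl hterm, Finset.sum_comm]
      rw [Finset.mul_sum]
      apply Finset.sum_congr rfl; intro a _
      rw [Finset.sum_comm, Finset.mul_sum]
      apply Finset.sum_congr rfl; intro b _
      rw [← Finset.mul_sum, root_sum q2 h2]
      by_cases hdvd : (q2:ℤ) ∣ (-((q1:ℤ) * a + (M:ℤ) * b))
      · have hdvd' : (q2:ℤ) ∣ ((q1:ℤ) * a + (M:ℤ) * b) := (dvd_neg).1 hdvd
        rw [if_pos hdvd, if_pos hdvd']
        field_simp
      · have hdvd' : ¬ (q2:ℤ) ∣ ((q1:ℤ) * a + (M:ℤ) * b) := fun h => hdvd (dvd_neg.2 h)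
        rw [if_neg hdvd, if_neg hdvd']
        simp
    rw [hrhs]
    -- LHS rewriting
    rw [finsum_eq_finset_sum_of_support_subset _ (hQsupp (fun k => w ^ (-k)))]
    have hswap : ∑ k ∈ E, Q k * w ^ (-k)
        = ∑ a ∈ Sg, ∑ b ∈ Su, ∑ k ∈ E,
            (if ((q1:ℤ) * a + (M:ℤ) * b = k ∧ (q2:ℤ) ∣ k)
              then ((gh a : ℝ) : ℂ) * ((u b : ℝ) : ℂ) else 0) * w ^ (-k) := by
      simp only [hQ, Finset.sum_mul]
      rw [Finset.sum_comm]
      apply Finset.sum_congr rfl; intro a _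
      rw [Finset.sum_comm]
    rw [hswap]
    apply Finset.sum_congr rfl; intro a ha
    apply Finset.sum_congr rfl; intro b hb
    have hmemE : (q1:ℤ) * a + (M:ℤ) * b ∈ E :=
      Finset.mem_image.2 ⟨(a, b), Finset.mem_product.2 ⟨ha, hb⟩, rfl⟩
    rw [Finset.sum_eq_single_of_mem _ hmemE]
    · by_cases hdvd : (q2:ℤ) ∣ ((q1:ℤ) * a + (M:ℤ) * b)
      · rw [if_pos ⟨rfl, hdvd⟩, if_pos hdvd]
      · rw [if_neg (fun hc => hdvd hc.2), if_neg hdvd, zero_mul]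
    · intro k _ hk
      rw [if_neg (fun hc => hk hc.1.symm), zero_mul]
  -- the P-sum evaluates to the lowpass difference
  have hPsum : ∀ w : ℂ, w ≠ 0 →
      ∑ᶠ k : ℤ, P k * w ^ (-k) = lev glnew (w ^ q2) - lev gl (w ^ q2) := by
    intro w hw
    have hsplit : (fun k : ℤ => P k * w ^ (-k)) = fun k =>
        (if (q2:ℤ) ∣ k then ((glnew (k / q2) : ℝ) : ℂ) else 0) * w ^ (-k)
        - (if (q2:ℤ) ∣ k then ((gl (k / q2) : ℝ) : ℂ) else 0) * w ^ (-k) := by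
      funext k; rw [hP]; ring
    rw [hsplit, finsum_sub_distrib (supp_dvd_finite glnew hglnew q2 _)
        (supp_dvd_finite gl hgl q2 _), ← lev_pow glnew q2 h2, ← lev_pow gl q2 h2]
  -- combine
  set F : ℤ → ℂ := fun k => P k - Q k with hF
  have hPfin : ∀ v : ℤ → ℂ, (Function.support (fun k => P k * v k)).Finite := by
    intro v
    have h1 := supp_dvd_finite glnew hglnew q2 v
    have h2' := supp_dvd_finite gl hgl q2 v
    apply Set.Finite.subset (h1.union h2')
    intro k hk
    simp only [Function.mem_support, hP] at hk
    by_contra hnot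
    simp only [Set.mem_union, Function.mem_support, not_or, not_not] at hnot
    apply hk
    rw [sub_mul, hnot.1, hnot.2, sub_zero]
  have hQfin : ∀ v : ℤ → ℂ, (Function.support (fun k => Q k * v k)).Finite := by
    intro v
    exact Set.Finite.subset E.finite_toSet (hQsupp v)
  have hF0 : ∀ w : ℂ, w ≠ 0 → ∑ᶠ k : ℤ, F k * w ^ (-k) = 0 := by
    intro w hw
    have hsplit : (fun k : ℤ => F k * w ^ (-k)) = fun k =>
        P k * w ^ (-k) - Q k * w ^ (-k) := by
      funext k; rw [hF]; ring
    rw [hsplit, finsum_sub_distrib (hPfin _) (hQfin _), hPsum w hw, hQsum w hw,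
      hformula w hw]
    ring
  have hFfin : (Function.support F).Finite := by
    have := (hPfin (fun _ => (1:ℂ))).union (hQfin (fun _ => (1:ℂ)))
    apply Set.Finite.subset this
    intro k hk
    simp only [Function.mem_support, hF] at hk
    by_contra hnot
    simp only [Set.mem_union, Function.mem_support, not_or, not_not, mul_one] at hnot
    exact hk (by rw [hnot.1, hnot.2, sub_zero])
  -- extract coefficients
  have hFzero : ∀ k : ℤ, F k = 0 := by
    have hgfin : (Function.support (fun k : ℤ => F (-k))).Finite := by
      rw [show (fun k : ℤ => F (-k)) = F ∘ (fun k : ℤ => -k) from rfl,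
        Function.support_comp_eq_preimage]
      exact hFfin.preimage (fun a _ b _ h => by omega)
    have hg0 : ∀ w : ℂ, w ≠ 0 → ∑ᶠ k : ℤ, F (-k) * w ^ k = 0 := by
      intro w hw
      have := hF0 w hw
      rw [finsum_reindex (fun k => F k * w ^ (-k)) (fun j => -j)
        neg_injective
        (fun k hk => absurd ⟨-k, neg_neg k⟩ hk)] at this
      simpa [neg_neg] using this
    have := laurent_ext (fun k => F (-k)) hgfin hg0
    intro k
    simpa [neg_neg] using this (-k)
  -- specialize to k = q2 * t
  intro t
  have hk := hFzero ((q2:ℤ) * t)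
  have hq2Z : (q2:ℤ) ≠ 0 := by exact_mod_cast Nat.one_le_iff_ne_zero.1 h2
  simp only [hF, hP, hQ, sub_eq_zero] at hk
  rw [if_pos ⟨t, rfl⟩, if_pos ⟨t, rfl⟩, Int.mul_ediv_cancel_left _ hq2Z] at hk
  have hcast : ((glnew t : ℝ) : ℂ) - ((gl t : ℝ) : ℂ)
      = ((∑ a ∈ Sg, ∑ b ∈ Su,
          (if (q1:ℤ) * a + (M:ℤ) * b = (q2:ℤ) * t then gh a * u b else 0) : ℝ) : ℂ) := by
    rw [hk]
    push_cast
    apply Finset.sum_congr rfl; intro a _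
    apply Finset.sum_congr rfl; intro b _
    by_cases hc : (q1:ℤ) * a + (M:ℤ) * b = (q2:ℤ) * t
    · rw [if_pos ⟨hc, ⟨t, rfl⟩⟩, if_pos hc]; push_cast; ring
    · rw [if_neg (fun hcc => hc hcc.1), if_neg hc]; simp
  have hreal : glnew t - gl t = ∑ a ∈ Sg, ∑ b ∈ Su,
      (if (q1:ℤ) * a + (M:ℤ) * b = (q2:ℤ) * t then gh a * u b else 0) := by
    apply Complex.ofReal_inj.1
    push_cast
    push_cast at hcast
    linear_combination hcast
  linarith [hreal]

lemma bij_sum (q1 q2 M : ℕ) (h1 : 1 ≤ q1) (h2 : 1 ≤ q2) (hM : M = q1 + q2)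
    (hcop : Nat.gcd M q1 = 1) (gh u : ℤ → ℝ)
    (hgh : (Function.support gh).Finite) (hu : (Function.support u).Finite) (n m : ℤ) :
    ∑ᶠ j : ℤ, u ((q2:ℤ) * n - (q1:ℤ) * j) * gh ((M:ℤ) * j - (q2:ℤ) * m)
      = ∑ a ∈ hgh.toFinset, ∑ b ∈ hu.toFinset,
          (if (q1:ℤ) * a + (M:ℤ) * b = (q2:ℤ) * ((M:ℤ) * n - (q1:ℤ) * m)
            then gh a * u b else 0) := by
  classical
  have hMZ : (M:ℤ) ≠ 0 := by
    have : 1 ≤ M := by omega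
    exact_mod_cast Nat.one_le_iff_ne_zero.1 this
  have hco : IsCoprime (M:ℤ) (q1:ℤ) := by
    rw [Int.isCoprime_iff_gcd_eq_one]
    simpa using hcop
  set v : ℤ → ℝ := fun j => u ((q2:ℤ) * n - (q1:ℤ) * j) * gh ((M:ℤ) * j - (q2:ℤ) * m)
    with hv
  set J : Finset ℤ := hgh.toFinset.image (fun a => (a + (q2:ℤ) * m) / M) with hJ
  have hsupp : Function.support v ⊆ (J : Set ℤ) := by
    intro j hj
    simp only [Function.mem_support, hv] at hj
    have hghj : gh ((M:ℤ) * j - (q2:ℤ) * m) ≠ 0 := fun h0 => hj (by rw [h0, mul_zero])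
    refine Finset.mem_coe.2 (Finset.mem_image.2 ⟨(M:ℤ) * j - (q2:ℤ) * m,
      hgh.mem_toFinset.2 hghj, ?_⟩)
    rw [sub_add_cancel, Int.mul_ediv_cancel_left _ hMZ]
  rw [finsum_eq_finset_sum_of_support_subset _ hsupp]
  -- convert RHS to a filtered product-set sum
  have hRHS : (∑ a ∈ hgh.toFinset, ∑ b ∈ hu.toFinset,
        (if (q1:ℤ) * a + (M:ℤ) * b = (q2:ℤ) * ((M:ℤ) * n - (q1:ℤ) * m)
          then gh a * u b else 0))
      = ∑ p ∈ (hgh.toFinset ×ˢ hu.toFinset).filter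
            (fun p : ℤ × ℤ => (q1:ℤ) * p.1 + (M:ℤ) * p.2
              = (q2:ℤ) * ((M:ℤ) * n - (q1:ℤ) * m)),
          gh p.1 * u p.2 := by
    rw [Finset.sum_filter, Finset.sum_product]
  rw [hRHS, ← Finset.sum_filter_ne_zero J]
  apply Finset.sum_nbij' (i := fun j : ℤ => ((M:ℤ) * j - (q2:ℤ) * m, (q2:ℤ) * n - (q1:ℤ) * j))
    (j := fun p : ℤ × ℤ => (p.1 + (q2:ℤ) * m) / M)
  · intro j hj
    simp only [Finset.mem_filter, hv] at hj
    obtain ⟨hjJ, hvj⟩ := hj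
    have hu0 : u ((q2:ℤ) * n - (q1:ℤ) * j) ≠ 0 := fun h0 => hvj (by rw [h0, zero_mul])
    have hg0 : gh ((M:ℤ) * j - (q2:ℤ) * m) ≠ 0 := fun h0 => hvj (by rw [h0, mul_zero])
    refine Finset.mem_filter.2 ⟨Finset.mem_product.2
      ⟨hgh.mem_toFinset.2 hg0, hu.mem_toFinset.2 hu0⟩, ?_⟩
    ring
  · intro p hp
    simp only [Finset.mem_filter, Finset.mem_product] at hp
    obtain ⟨⟨hpa, hpb⟩, hpc⟩ := hp
    -- arithmetic: M ∣ p.1 + q2 * m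
    have hdvd : (M:ℤ) ∣ (p.1 + (q2:ℤ) * m) := by
      apply hco.dvd_of_dvd_mul_left
      exact ⟨(q2:ℤ) * n - p.2, by linear_combination hpc⟩
    obtain ⟨j, hj⟩ := hdvd
    have hjval : (p.1 + (q2:ℤ) * m) / M = j := by rw [hj, Int.mul_ediv_cancel_left _ hMZ]
    have ha : (M:ℤ) * j - (q2:ℤ) * m = p.1 := by omega
    have hb : (q2:ℤ) * n - (q1:ℤ) * j = p.2 := by
      have : (M:ℤ) * ((q2:ℤ) * n - (q1:ℤ) * j) = (M:ℤ) * p.2 := by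
        linear_combination (q1:ℤ) * hj - hpc
      exact mul_left_cancel₀ hMZ this
    refine Finset.mem_filter.2 ⟨?_, ?_⟩
    · rw [hjval]
      exact Finset.mem_image.2 ⟨p.1, hpa, by rw [hjval]⟩
    · rw [hjval, hv]
      simp only
      rw [ha, hb]
      intro h0
      rcases mul_eq_zero.1 h0 with h | h
      · exact (hu.mem_toFinset.1 hpb) h
      · exact (hgh.mem_toFinset.1 hpa) h
  · intro j _
    rw [sub_add_cancel, Int.mul_ediv_cancel_left _ hMZ]
  · intro p hp
    simp only [Finset.mem_filter, Finset.mem_product] at hp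
    obtain ⟨⟨hpa, hpb⟩, hpc⟩ := hp
    have hdvd : (M:ℤ) ∣ (p.1 + (q2:ℤ) * m) := by
      apply hco.dvd_of_dvd_mul_left
      exact ⟨(q2:ℤ) * n - p.2, by linear_combination hpc⟩
    obtain ⟨j, hj⟩ := hdvd
    have hjval : (p.1 + (q2:ℤ) * m) / M = j := by rw [hj, Int.mul_ediv_cancel_left _ hMZ]
    have ha : (M:ℤ) * j - (q2:ℤ) * m = p.1 := by omega
    have hb : (q2:ℤ) * n - (q1:ℤ) * j = p.2 := by
      have : (M:ℤ) * ((q2:ℤ) * n - (q1:ℤ) * j) = (M:ℤ) * p.2 := by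
        linear_combination (q1:ℤ) * hj - hpc
      exact mul_left_cancel₀ hMZ this
    rw [hjval]
    exact Prod.ext ha hb
  · intro j _
    rw [hv]
    simp only
    ring

/-- Theorem 4: in a 2-channel rational filterbank (branches
`↑q1 → G_l → ↓M` and `↑q2 → G_h → ↓M`, `M = q1 + q2`, `gcd(M, q1) = 1`),
the lifting update step with composite update filter `U(z) = R_u(z) S(z)`
(detail subband upsampled by `q1`, filtered by `U`, downsampled by `q2`, and
added to the approximation subband) is equivalent to replacing `G_l` by
`G_l^{new}(z) = G_l(z) + (1/q2) Σ_{r=0}^{q2−1} G_h(z^{q1/q2} W_{q2}^{q1 r}) U(z^{M/q2} W_{q2}^{M r})`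
with `W_{q2} = exp(−2πi/q2)` (stated via the substitution `z = w^{q2}`):
both systems produce identical upper-branch outputs for every input. -/
theorem update_step_equivalent_lowpass (q1 q2 M : ℕ) (h1 : 1 ≤ q1) (h2 : 1 ≤ q2)
    (hM : M = q1 + q2) (hcop : Nat.gcd M q1 = 1)
    (gl gh u glnew : ℤ → ℝ)
    (hgl : (Function.support gl).Finite) (hgh : (Function.support gh).Finite)
    (hu : (Function.support u).Finite) (hglnew : (Function.support glnew).Finite)
    (hformula : ∀ w : ℂ, w ≠ 0 →
      lev glnew (w ^ q2) = lev gl (w ^ q2) +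
        (1 / (q2 : ℂ)) * ∑ r ∈ Finset.range q2,
          lev gh (w ^ q1 * Complex.exp (-(2 * Real.pi * Complex.I) / q2) ^ (q1 * r)) *
            lev u (w ^ M * Complex.exp (-(2 * Real.pi * Complex.I) / q2) ^ (M * r))) :
    ∀ (x : ℤ → ℝ) (n : ℤ),
      downSample M (conv gl (upSample q1 x)) n +
          downSample q2 (conv u (upSample q1 (downSample M (conv gh (upSample q2 x))))) n
        = downSample M (conv glnew (upSample q1 x)) n := by
  classical
  intro x n
  have hq1Z : (q1:ℤ) ≠ 0 := by exact_mod_cast Nat.one_le_iff_ne_zero.1 h1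
  have hq2Z : (q2:ℤ) ≠ 0 := by exact_mod_cast Nat.one_le_iff_ne_zero.1 h2
  have hM1 : 1 ≤ M := by omega
  -- coefficient identity
  have hcoeff := coeff_identity q1 q2 M h1 h2 hM gl gh u glnew hgl hgh hu hglnew hformula
  -- the three branch computations
  set A : ℤ → ℝ := downSample M (conv gh (upSample q2 x)) with hA
  have hAj : ∀ j : ℤ, A j = ∑ᶠ m : ℤ, gh ((M:ℤ) * j - (q2:ℤ) * m) * x m := by
    intro j
    rw [hA, downSample, conv_up gh x q2 h2]
  have hL1 : downSample M (conv gl (upSample q1 x)) n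
      = ∑ᶠ m : ℤ, gl ((M:ℤ) * n - (q1:ℤ) * m) * x m := by
    rw [downSample, conv_up gl x q1 h1]
  have hR : downSample M (conv glnew (upSample q1 x)) n
      = ∑ᶠ m : ℤ, glnew ((M:ℤ) * n - (q1:ℤ) * m) * x m := by
    rw [downSample, conv_up glnew x q1 h1]
  have hL2 : downSample q2 (conv u (upSample q1 A)) n
      = ∑ᶠ j : ℤ, u ((q2:ℤ) * n - (q1:ℤ) * j) * A j := by
    rw [downSample, conv_up u A q1 h1]
  -- finite index sets
  have hJfin : ({j : ℤ | u ((q2:ℤ) * n - (q1:ℤ) * j) ≠ 0}).Finite := by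
    have : ({j : ℤ | u ((q2:ℤ) * n - (q1:ℤ) * j) ≠ 0})
        = (fun j : ℤ => (q2:ℤ) * n - (q1:ℤ) * j) ⁻¹' (Function.support u) := rfl
    rw [this]
    apply hu.preimage
    intro a _ b _ hab
    simp only at hab
    have : (q1:ℤ) * a = (q1:ℤ) * b := by omega
    exact mul_left_cancel₀ hq1Z this
  have hKfin : ∀ j : ℤ, ({m : ℤ | gh ((M:ℤ) * j - (q2:ℤ) * m) ≠ 0}).Finite := by
    intro j
    have : ({m : ℤ | gh ((M:ℤ) * j - (q2:ℤ) * m) ≠ 0})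
        = (fun m : ℤ => (M:ℤ) * j - (q2:ℤ) * m) ⁻¹' (Function.support gh) := rfl
    rw [this]
    apply hgh.preimage
    intro a _ b _ hab
    simp only at hab
    have : (q2:ℤ) * a = (q2:ℤ) * b := by omega
    exact mul_left_cancel₀ hq2Z this
  set Jf : Finset ℤ := hJfin.toFinset with hJf
  set K : Finset ℤ := Jf.biUnion (fun j => (hKfin j).toFinset) with hK
  set c2 : ℤ → ℝ := fun m => ∑ᶠ j : ℤ, u ((q2:ℤ) * n - (q1:ℤ) * j) *
      gh ((M:ℤ) * j - (q2:ℤ) * m) with hc2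
  -- the update branch as a single sum over m
  have hT2 : (∑ᶠ j : ℤ, u ((q2:ℤ) * n - (q1:ℤ) * j) * A j)
      = ∑ᶠ m : ℤ, c2 m * x m := by
    have hs1 : Function.support (fun j : ℤ => u ((q2:ℤ) * n - (q1:ℤ) * j) * A j)
        ⊆ (Jf : Set ℤ) := by
      intro j hj
      simp only [Function.mem_support] at hj
      have : u ((q2:ℤ) * n - (q1:ℤ) * j) ≠ 0 := fun h0 => hj (by rw [h0, zero_mul])
      simpa [hJf] using this
    rw [finsum_eq_finset_sum_of_support_subset _ hs1]
    have hstep2 : ∀ j ∈ Jf, u ((q2:ℤ) * n - (q1:ℤ) * j) * A j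
        = ∑ m ∈ K, u ((q2:ℤ) * n - (q1:ℤ) * j) * (gh ((M:ℤ) * j - (q2:ℤ) * m) * x m) := by
      intro j hj
      rw [hAj j, finsum_eq_finset_sum_of_support_subset
        (fun m => gh ((M:ℤ) * j - (q2:ℤ) * m) * x m) (s := K) ?_, Finset.mul_sum]
      intro m hm
      simp only [Function.mem_support] at hm
      have hghm : gh ((M:ℤ) * j - (q2:ℤ) * m) ≠ 0 := fun h0 => hm (by rw [h0, zero_mul])
      refine Finset.mem_coe.2 (Finset.mem_biUnion.2 ⟨j, hj, ?_⟩)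
      simpa using hghm
    rw [Finset.sum_congr rfl hstep2, Finset.sum_comm]
    have hs5 : Function.support (fun m : ℤ => c2 m * x m) ⊆ (K : Set ℤ) := by
      intro m hm
      simp only [Function.mem_support] at hm
      have hc2m : c2 m ≠ 0 := fun h0 => hm (by rw [h0, zero_mul])
      by_contra hmK
      apply hc2m
      rw [hc2]
      apply finsum_eq_zero_of_forall_eq_zero
      intro j
      by_cases hju : u ((q2:ℤ) * n - (q1:ℤ) * j) = 0
      · rw [hju, zero_mul]
      · by_cases hjg : gh ((M:ℤ) * j - (q2:ℤ) * m) = 0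
        · rw [hjg, mul_zero]
        · exfalso
          apply hmK
          refine Finset.mem_coe.2 (Finset.mem_biUnion.2 ⟨j, by simpa [hJf] using hju, ?_⟩)
          simpa using hjg
    rw [finsum_eq_finset_sum_of_support_subset _ hs5]
    apply Finset.sum_congr rfl
    intro m _
    have : ∑ j ∈ Jf, u ((q2:ℤ) * n - (q1:ℤ) * j) * (gh ((M:ℤ) * j - (q2:ℤ) * m) * x m)
        = (∑ j ∈ Jf, u ((q2:ℤ) * n - (q1:ℤ) * j) * gh ((M:ℤ) * j - (q2:ℤ) * m)) * x m := by
      rw [Finset.sum_mul]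
      apply Finset.sum_congr rfl
      intro j _
      ring
    rw [this]
    congr 1
    rw [hc2]
    symm
    apply finsum_eq_finset_sum_of_support_subset
    intro j hj
    simp only [Function.mem_support] at hj
    have : u ((q2:ℤ) * n - (q1:ℤ) * j) ≠ 0 := fun h0 => hj (by rw [h0, zero_mul])
    simpa [hJf] using this
  -- support facts for the final merge
  have hglfin : (Function.support (fun m : ℤ => gl ((M:ℤ) * n - (q1:ℤ) * m) * x m)).Finite := by
    apply Set.Finite.subset
      (Set.Finite.preimage (f := fun m : ℤ => (M:ℤ) * n - (q1:ℤ) * m) ?_ hgl)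
    · intro m hm
      simp only [Function.mem_support] at hm
      have : gl ((M:ℤ) * n - (q1:ℤ) * m) ≠ 0 := fun h0 => hm (by rw [h0, zero_mul])
      exact this
    · intro a _ b _ hab
      simp only at hab
      have : (q1:ℤ) * a = (q1:ℤ) * b := by omega
      exact mul_left_cancel₀ hq1Z this
  have hc2fin : (Function.support (fun m : ℤ => c2 m * x m)).Finite := by
    apply Set.Finite.subset K.finite_toSet
    intro m hm
    simp only [Function.mem_support] at hm
    have hc2m : c2 m ≠ 0 := fun h0 => hm (by rw [h0, zero_mul])
    by_contra hmK
    apply hc2m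
    rw [hc2]
    apply finsum_eq_zero_of_forall_eq_zero
    intro j
    by_cases hju : u ((q2:ℤ) * n - (q1:ℤ) * j) = 0
    · rw [hju, zero_mul]
    · by_cases hjg : gh ((M:ℤ) * j - (q2:ℤ) * m) = 0
      · rw [hjg, mul_zero]
      · exfalso
        apply hmK
        refine Finset.mem_coe.2 (Finset.mem_biUnion.2 ⟨j, by simpa [hJf] using hju, ?_⟩)
        simpa using hjg
  -- put everything together
  rw [hL1, hL2, hT2, hR, ← finsum_add_distrib hglfin hc2fin]
  apply finsum_congr
  intro m
  have hkey : glnew ((M:ℤ) * n - (q1:ℤ) * m)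
      = gl ((M:ℤ) * n - (q1:ℤ) * m) + c2 m := by
    have hbij := bij_sum q1 q2 M h1 h2 hM hcop gh u hgh hu n m
    rw [hcoeff ((M:ℤ) * n - (q1:ℤ) * m), ← hbij, hc2]
  rw [hkey]
  ring
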